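/- There exists a constant C > 0 with the following property: if m₁, m₂, m₃ are three distinct points of ℤ² all lying on a circle of radius r > 1, and the two difference vectors w₁ = m₂ − m₁ and w₂ = m₃ − m₂ are linearly independent, then max{|w₁|, |w₂|} ≥ C·r^{1/3}. -/

import Mathlib

set_option maxHeartbeats 1000000 in

lemma key_ident (x1 y1 x2 y2 x3 y3 r : ℝ)
    (h1 : x1^2 + y1^2 = r^2) (h2 : x2^2 + y2^2 = r^2) (h3 : x3^2 + y3^2 = r^2) :
    ((x2-x1)^2+(y2-y1)^2) * (((x3-x2)^2+(y3-y2)^2) * ((x3-x1)^2+(y3-y1)^2))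
      = 4*r^2*((x2-x1)*(y3-y2)-(y2-y1)*(x3-x2))^2 := by
  linear_combination
    ((-3)*y3^2*r^2 + (1)*y3^4 + (6)*y2*y3*r^2 + (-2)*y2*y3^3 + (-3)*y2^2*r^2 + (2)*y2^2*y3^2 + (-2)*y2^3*y3 + (1)*y2^4 + (-2)*y1*y3^3 + (2)*y1*y2*y3^2 + (2)*y1*y2^2*y3 + (-2)*y1*y2^3 + (1)*y1^2*y3^2 + (-2)*y1^2*y2*y3 + (1)*y1^2*y2^2 + (1)*x3^2*r^2 + (2)*x3^2*y3^2 + (-2)*x3^2*y2*y3 + (2)*x3^2*y2^2 + (-2)*x3^2*y1*y3 + (-2)*x3^2*y1*y2 + (1)*x3^2*y1^2 + (1)*x3^4 + (-2)*x2*x3*r^2 + (2)*x2*x3*y3^2 + (-8)*x2*x3*y2*y3 + (2)*x2*x3*y2^2 + (4)*x2*x3*y1*y3 + (4)*x2*x3*y1*y2 + (-2)*x2*x3*y1^2 + (2)*x2*x3^3 + (1)*x2^2*r^2 + (2)*x2^2*y3^2 + (-2)*x2^2*y2*y3 + (2)*x2^2*y2^2 + (-2)*x2^2*y1*y3 + (-2)*x2^2*y1*y2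 + (1)*x2^2*y1^2 + (-6)*x2^2*x3^2 + (2)*x2^3*x3 + (1)*x2^4 + (-2)*x1*x3*y3^2 + (4)*x1*x3*y2*y3 + (-2)*x1*x3*y2^2 + (-2)*x1*x3^3 + (-2)*x1*x2*y3^2 + (4)*x1*x2*y2*y3 + (-2)*x1*x2*y2^2 + (2)*x1*x2*x3^2 + (2)*x1*x2^2*x3 + (-2)*x1*x2^3 + (1)*x1^2*y3^2 + (-2)*x1^2*y2*y3 + (1)*x1^2*y2^2 + (1)*x1^2*x3^2 + (-2)*x1^2*x2*x3 + (1)*x1^2*x2^2) * h1 +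
    ((2)*r^4 + (-1)*y3^2*r^2 + (1)*y3^4 + (-2)*y2*y3*r^2 + (-2)*y2*y3^3 + (1)*y2^2*r^2 + (1)*y2^2*y3^2 + (4)*y1*y3*r^2 + (-2)*y1*y3^3 + (-2)*y1*y2*r^2 + (2)*y1*y2*y3^2 + (-2)*y1*y2^2*y3 + (-4)*y1^2*r^2 + (4)*y1^2*y2*y3 + (-5)*x3^2*r^2 + (2)*x3^2*y3^2 + (-2)*x3^2*y2*y3 + (1)*x3^2*y2^2 + (-2)*x3^2*y1*y3 + (-2)*x3^2*y1*y2 + (8)*x3^2*y1^2 + (1)*x3^4 + (2)*x2*x3*r^2 + (-2)*x2*x3*y3^2 + (4)*x2*x3*y1*y3 + (-4)*x2*x3*y1^2 + (-2)*x2*x3^3 + (1)*x2^2*r^2 + (1)*x2^2*y3^2 + (-2)*x2^2*y1*y3 + (1)*x2^2*x3^2 + (2)*x1*x3*y3^2 + (4)*x1*x3*y2*y3 + (-2)*x1*x3*y2^2 + (-8)*x1*x3*y1*y3 + (4)*x1*x3*y1*y2 + (2)*x1*x3^3 + (-2)*x1*x2*r^2 + (-2)*x1*x2*y3^2 + (4)*x1*x2*y1*y3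 + (2)*x1*x2*x3^2 + (-2)*x1*x2^2*x3) * h2 +
    ((-2)*r^4 + (2)*y3^2*r^2 + (-4)*y2*y3*r^2 + (4)*y2^2*r^2 + (-4)*y1*y3*r^2 + (2)*y1*y2*r^2 + (-2)*y1*y2*y3^2 + (4)*y1*y2^2*y3 + (4)*y1^2*r^2 + (4)*y1^2*y2*y3 + (-8)*y1^2*y2^2 + (2)*x3^2*r^2 + (-2)*x3^2*y1*y2 + (4)*x2*x3*y1*y2 + (-4)*x2*x3*y1^2 + (-4)*x1*x3*y2^2 + (4)*x1*x3*y1*y2 + (2)*x1*x2*r^2 + (-2)*x1*x2*y3^2 + (4)*x1*x2*y2*y3 + (4)*x1*x2*y1*y3 + (-8)*x1*x2*y1*y2 + (-2)*x1*x2*x3^2) * h3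


set_option maxHeartbeats 1000000 in
theorem stmt7 : ∃ C : ℝ, 0 < C ∧
    ∀ (m₁ m₂ m₃ : ℤ × ℤ) (c : ℝ × ℝ) (r : ℝ), 1 < r →
      m₁ ≠ m₂ → m₂ ≠ m₃ → m₁ ≠ m₃ →
      ((m₁.1 : ℝ) - c.1) ^ 2 + ((m₁.2 : ℝ) - c.2) ^ 2 = r ^ 2 →
      ((m₂.1 : ℝ) - c.1) ^ 2 + ((m₂.2 : ℝ) - c.2) ^ 2 = r ^ 2 →
      ((m₃.1 : ℝ) - c.1) ^ 2 + ((m₃.2 : ℝ) - c.2) ^ 2 = r ^ 2 →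
      (m₂.1 - m₁.1) * (m₃.2 - m₂.2) - (m₂.2 - m₁.2) * (m₃.1 - m₂.1) ≠ 0 →
      C * r ^ ((1 : ℝ) / 3) ≤
        max (Real.sqrt (((m₂.1 - m₁.1 : ℤ) : ℝ) ^ 2 + ((m₂.2 - m₁.2 : ℤ) : ℝ) ^ 2))
            (Real.sqrt (((m₃.1 - m₂.1 : ℤ) : ℝ) ^ 2 + ((m₃.2 - m₂.2 : ℤ) : ℝ) ^ 2)) := by
  refine ⟨1, one_pos, ?_⟩
  intro m₁ m₂ m₃ c r hr _ _ _ h1 h2 h3 hdet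
  set x1 : ℝ := (m₁.1 : ℝ) - c.1 with hx1
  set y1 : ℝ := (m₁.2 : ℝ) - c.2 with hy1
  set x2 : ℝ := (m₂.1 : ℝ) - c.1 with hx2
  set y2 : ℝ := (m₂.2 : ℝ) - c.2 with hy2
  set x3 : ℝ := (m₃.1 : ℝ) - c.1 with hx3
  set y3 : ℝ := (m₃.2 : ℝ) - c.2 with hy3
  have key := key_ident x1 y1 x2 y2 x3 y3 r h1 h2 h3
  have ex2 : x2 - x1 = ((m₂.1 - m₁.1 : ℤ) : ℝ) := by push_cast [hx1, hx2]; ring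
  have ey2 : y2 - y1 = ((m₂.2 - m₁.2 : ℤ) : ℝ) := by push_cast [hy1, hy2]; ring
  have ex3 : x3 - x2 = ((m₃.1 - m₂.1 : ℤ) : ℝ) := by push_cast [hx2, hx3]; ring
  have ey3 : y3 - y2 = ((m₃.2 - m₂.2 : ℤ) : ℝ) := by push_cast [hy2, hy3]; ring
  set A : ℝ := ((m₂.1 - m₁.1 : ℤ) : ℝ) ^ 2 + ((m₂.2 - m₁.2 : ℤ) : ℝ) ^ 2 with hA
  set B : ℝ := ((m₃.1 - m₂.1 : ℤ) : ℝ) ^ 2 + ((m₃.2 - m₂.2 : ℤ) : ℝ) ^ 2 with hB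
  have hA0 : 0 ≤ A := by positivity
  have hB0 : 0 ≤ B := by positivity
  set a : ℝ := Real.sqrt A with ha
  set b : ℝ := Real.sqrt B with hb
  have ha0 : 0 ≤ a := Real.sqrt_nonneg _
  have hb0 : 0 ≤ b := Real.sqrt_nonneg _
  have ha2 : a ^ 2 = A := Real.sq_sqrt hA0
  have hb2 : b ^ 2 = B := Real.sq_sqrt hB0
  set M : ℝ := max a b with hM
  have haM : a ≤ M := le_max_left _ _
  have hbM : b ≤ M := le_max_right _ _
  have hM0 : 0 ≤ M := le_trans ha0 haM
  -- integer determinant has square ≥ 1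
  have hd1 : (1 : ℝ) ≤ ((x2 - x1) * (y3 - y2) - (y2 - y1) * (x3 - x2)) ^ 2 := by
    rw [ex2, ey2, ex3, ey3]
    have hZ : (1 : ℤ) ≤ ((m₂.1 - m₁.1) * (m₃.2 - m₂.2) - (m₂.2 - m₁.2) * (m₃.1 - m₂.1)) ^ 2 := by
      have h := Int.one_le_abs (by exact_mod_cast hdet)
      calc (1 : ℤ) = 1 ^ 2 := by norm_num
        _ ≤ |(m₂.1 - m₁.1) * (m₃.2 - m₂.2) - (m₂.2 - m₁.2) * (m₃.1 - m₂.1)| ^ 2 :=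
            pow_le_pow_left₀ (by norm_num) h 2
        _ = _ := sq_abs _
    calc (1 : ℝ) ≤ (((m₂.1 - m₁.1) * (m₃.2 - m₂.2) - (m₂.2 - m₁.2) * (m₃.1 - m₂.1) : ℤ) : ℝ) ^ 2 := by
          exact_mod_cast hZ
      _ = _ := by push_cast; ring
  have hAeq : (x2 - x1) ^ 2 + (y2 - y1) ^ 2 = A := by rw [ex2, ey2]
  have hBeq : (x3 - x2) ^ 2 + (y3 - y2) ^ 2 = B := by rw [ex3, ey3]
  set Cs : ℝ := (x3 - x1) ^ 2 + (y3 - y1) ^ 2 with hCs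
  have hCs0 : 0 ≤ Cs := by positivity
  -- dot product bound (Cauchy–Schwarz via Lagrange identity)
  have hdot : (x2 - x1) * (x3 - x2) + (y2 - y1) * (y3 - y2) ≤ a * b := by
    set dt := (x2 - x1) * (x3 - x2) + (y2 - y1) * (y3 - y2) with hdt
    have hle : dt ≤ |dt| := le_abs_self _
    have habs : |dt| = Real.sqrt (dt ^ 2) := (Real.sqrt_sq_eq_abs dt).symm
    have h3' : dt ^ 2 ≤ A * B := by
      have hlag : A * B = dt ^ 2 + ((x2 - x1) * (y3 - y2) - (y2 - y1) * (x3 - x2)) ^ 2 := by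
        rw [← hAeq, ← hBeq, hdt]; ring
      have := sq_nonneg ((x2 - x1) * (y3 - y2) - (y2 - y1) * (x3 - x2))
      linarith [hlag, this]
    calc dt ≤ Real.sqrt (dt ^ 2) := habs ▸ hle
      _ ≤ Real.sqrt (A * B) := Real.sqrt_le_sqrt h3'
      _ = a * b := by rw [ha, hb, Real.sqrt_mul hA0]
  have hCle : Cs ≤ (a + b) ^ 2 := by
    have hsplit : Cs = ((x2 - x1) ^ 2 + (y2 - y1) ^ 2) + ((x3 - x2) ^ 2 + (y3 - y2) ^ 2)
        + 2 * ((x2 - x1) * (x3 - x2) + (y2 - y1) * (y3 - y2)) := by rw [hCs]; ring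
    have hexp : (a + b) ^ 2 = a ^ 2 + b ^ 2 + 2 * (a * b) := by ring
    rw [hsplit, hAeq, hBeq, ← ha2, ← hb2, hexp]
    linarith [hdot]
  have hr0 : (0 : ℝ) < r := lt_trans one_pos hr
  -- main chain
  have hkey2 : 4 * r ^ 2 ≤ A * (B * Cs) := by
    rw [hAeq, hBeq, hCs] at key
    calc 4 * r ^ 2 = 4 * r ^ 2 * 1 := by ring
      _ ≤ 4 * r ^ 2 * ((x2 - x1) * (y3 - y2) - (y2 - y1) * (x3 - x2)) ^ 2 :=
          mul_le_mul_of_nonneg_left hd1 (by positivity)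
      _ = _ := key.symm
  have hbig : A * (B * Cs) ≤ M ^ 2 * (M ^ 2 * (2 * M) ^ 2) := by
    have hAM : A ≤ M ^ 2 := by rw [← ha2]; exact pow_le_pow_left₀ ha0 haM 2
    have hBM : B ≤ M ^ 2 := by rw [← hb2]; exact pow_le_pow_left₀ hb0 hbM 2
    have hCM : Cs ≤ (2 * M) ^ 2 :=
      le_trans hCle (pow_le_pow_left₀ (by positivity) (by linarith) 2)
    have h1' : B * Cs ≤ M ^ 2 * (2 * M) ^ 2 := mul_le_mul hBM hCM hCs0 (by positivity)
    exact mul_le_mul hAM h1' (by positivity) (by positivity)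
  have hrM : r ^ 2 ≤ (M ^ 3) ^ 2 := by
    have hchain : 4 * r ^ 2 ≤ 4 * M ^ 6 := by
      calc 4 * r ^ 2 ≤ A * (B * Cs) := hkey2
        _ ≤ M ^ 2 * (M ^ 2 * (2 * M) ^ 2) := hbig
        _ = 4 * M ^ 6 := by ring
    have : (M ^ 3) ^ 2 = M ^ 6 := by ring
    linarith [hchain, this]
  have hrM3 : r ≤ M ^ 3 := by
    have := Real.sqrt_le_sqrt hrM
    rwa [Real.sqrt_sq hr0.le, Real.sqrt_sq (pow_nonneg hM0 3)] at this
  have final : r ^ ((1 : ℝ) / 3) ≤ M := by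
    have h1' : r ^ ((1 : ℝ) / 3) ≤ (M ^ 3) ^ ((1 : ℝ) / 3) :=
      Real.rpow_le_rpow hr0.le hrM3 (by norm_num)
    have h2' : (M ^ 3) ^ ((1 : ℝ) / 3) = M := by
      rw [← Real.rpow_natCast M 3, ← Real.rpow_mul hM0]
      norm_num
    rwa [h2'] at h1'
  simpa using final
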